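/- Let S, T : Fin 4 → Fin 4 → Fin 4 → Fin 4 → ℝ be 4-index arrays, each of boost order ≤ −1 with respect to the boost weights w. Then the 2-index array P(a,b) = ∑_{c,c',d,d',e,e'} g(c,c') g(d,d') g(e,e') · S(a,c,d,e) · T(b,c',d',e') satisfies P(a,b) = 0 for every (a,b) ≠ (1,1); that is, P is a multiple of ℓ_a ℓ_b where ℓ_a = g(0,a). (Rank-2 tensors built quadratically from tensors of boost order ≤ −1, such as F₂ = C^{pqrs}_{;a} C_{pqrs;b} for type III Weyl tensors, are proportional to ℓ_a ℓ_b.) -/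
import Mathlib


/-- The null-frame metric on a 4-dimensional Lorentzian vector space:
`g 0 1 = g 1 0 = 1`, `g 2 2 = g 3 3 = 1`, all other components vanish. -/
def gnf : Fin 4 → Fin 4 → ℝ := fun a b =>
  if (a = 0 ∧ b = 1) ∨ (a = 1 ∧ b = 0) ∨ (a = 2 ∧ b = 2) ∨ (a = 3 ∧ b = 3) then 1 else 0

/-- Boost weights of the null-frame indices: `w 0 = 1`, `w 1 = -1`, `w 2 = w 3 = 0`. -/
def bw : Fin 4 → ℤ := ![1, -1, 0, 0]

lemma gnf_pair {x y : Fin 4} (h : gnf x y ≠ 0) : bw x + bw y = 0 := by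
  fin_cases x <;> fin_cases y <;> simp [gnf, bw] at h ⊢

lemma bw_ge (x : Fin 4) : bw x ≥ -1 := by fin_cases x <;> decide

lemma bw_eq_neg_one {x : Fin 4} (h : bw x = -1) : x = 1 := by
  fin_cases x <;> simp [bw] at h ⊢

/-- A rank-2 tensor built quadratically (with a triple metric contraction) from
two 4-index arrays of boost order `≤ -1` is a multiple of `ℓ_a ℓ_b`: all its
components other than the `(1,1)` component vanish. -/
theorem rank2_quadratic_boostOrder (S T : Fin 4 → Fin 4 → Fin 4 → Fin 4 → ℝ)
    (hS : ∀ a b c d : Fin 4, bw a + bw b + bw c + bw d > -1 → S a b c d = 0)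
    (hT : ∀ a b c d : Fin 4, bw a + bw b + bw c + bw d > -1 → T a b c d = 0)
    (a b : Fin 4) (hab : (a, b) ≠ (1, 1)) :
    (∑ c, ∑ c', ∑ d, ∑ d', ∑ e, ∑ e',
        gnf c c' * gnf d d' * gnf e e' * S a c d e * T b c' d' e') = 0 := by
  refine Finset.sum_eq_zero fun c _ => Finset.sum_eq_zero fun c' _ =>
    Finset.sum_eq_zero fun d _ => Finset.sum_eq_zero fun d' _ =>
    Finset.sum_eq_zero fun e _ => Finset.sum_eq_zero fun e' _ => ?_
  by_contra h
  simp only [mul_eq_zero, not_or] at h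
  obtain ⟨⟨⟨⟨h1, h2⟩, h3⟩, hSne⟩, hTne⟩ := h
  have pc := gnf_pair h1
  have pd := gnf_pair h2
  have pe := gnf_pair h3
  have hSle : bw a + bw c + bw d + bw e ≤ -1 := by
    by_contra h'; push_neg at h'; exact hSne (hS _ _ _ _ h')
  have hTle : bw b + bw c' + bw d' + bw e' ≤ -1 := by
    by_contra h'; push_neg at h'; exact hTne (hT _ _ _ _ h')
  have ha := bw_ge a
  have hb := bw_ge b
  have haa : a = 1 := bw_eq_neg_one (by omega)
  have hbb : b = 1 := bw_eq_neg_one (by omega)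
  exact hab (by rw [haa, hbb])
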